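/- (Rural hospital theorem for responsive preferences) If μ and μ' are both stable matchings in a two-sided matching market with responsive hospital preferences, then every hospital is matched to the same number of doctors in μ and μ', i.e., |μ_h| = |μ'_h| for all hospitals h; consequently the distributions ξ(μ) and ξ(μ') coincide. -/

import Mathlib

open Finset

variable {D H : Type*} [Fintype D] [DecidableEq D] [Fintype H] [DecidableEq H]

/-- The hospital doctor `d` proposes to, given the set `A` of (doctor, hospital)
pairs `(d, h)` such that `h` has already rejected `d`.  Doctor preferences are
given by `pref d`, the list of `d`'s acceptable hospitals in order of strict
preference. -/
def propose (pref : D → List H) (A : Finset (D × H)) (d : D) : Option H :=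
  (pref d).find? (fun h => decide ((d, h) ∉ A))

/-- The set of doctors currently applying to hospital `h`. -/
def proposers (pref : D → List H) (A : Finset (D × H)) (h : H) : Finset D :=
  univ.filter (fun d => propose pref A d = some h)

/-- The (up to) `n` best doctors of `S` according to hospital `h`'s strict
priority order (lower `prio h` value means more preferred). -/
def topN (prio : H → D → ℕ) (h : H) (n : ℕ) (S : Finset D) : Finset D :=
  S.filter (fun d => (S.filter (fun d' => prio h d' < prio h d)).card < n)

/-- The doctors tentatively kept by hospital `h`: the best acceptable applicants,
up to the capacity `q h`. -/
def kept (pref : D → List H) (prio : H → D → ℕ) (acc : H → Finset D) (q : H → ℕ)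
    (A : Finset (D × H)) (h : H) : Finset D :=
  topN prio h (q h) (proposers pref A h ∩ acc h)

/-- One round of the doctor-proposing deferred acceptance algorithm, recorded via
the set of rejections so far: every applicant not tentatively kept is rejected. -/
def daStep (pref : D → List H) (prio : H → D → ℕ) (acc : H → Finset D) (q : H → ℕ)
    (A : Finset (D × H)) : Finset (D × H) :=
  A ∪ univ.filter (fun p : D × H =>
    propose pref A p.1 = some p.2 ∧ p.1 ∉ kept pref prio acc q A p.2)

/-- The outcome of the doctor-proposing deferred acceptance algorithm. -/
def daMatch (pref : D → List H) (prio : H → D → ℕ) (acc : H → Finset D) (q : H → ℕ)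
    (d : D) : Option H :=
  propose pref ((daStep pref prio acc q)^[Fintype.card D * Fintype.card H + 1] ∅) d

/-- The set of doctors matched to hospital `h` under matching `μ`. -/
def matchedSet (μ : D → Option H) (h : H) : Finset D :=
  univ.filter (fun d => μ d = some h)

/-- The rank of an outcome in doctor `d`'s preference list (smaller is better;
being unmatched ranks just below the least preferred acceptable hospital). -/
def rankOf (pref : D → List H) (d : D) : Option H → ℕ
  | none => (pref d).length
  | some h => (pref d).idxOf h

/-- Doctor `d` strictly prefers hospital `h` to outcome `o`. -/
def DPrefers (pref : D → List H) (d : D) (h : H) (o : Option H) : Prop :=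
  h ∈ pref d ∧ rankOf pref d (some h) < rankOf pref d o

/-- Individual rationality: nobody is matched with an unacceptable partner. -/
def IndivRat (pref : D → List H) (acc : H → Finset D) (μ : D → Option H) : Prop :=
  ∀ d h, μ d = some h → h ∈ pref d ∧ d ∈ acc h

/-- `(d, h)` is a blocking pair of `μ`. -/
def Blocks (pref : D → List H) (prio : H → D → ℕ) (acc : H → Finset D) (q : H → ℕ)
    (μ : D → Option H) (d : D) (h : H) : Prop :=
  DPrefers pref d h (μ d) ∧
    (((matchedSet μ h).card < q h ∧ d ∈ acc h) ∨
      ∃ d' ∈ matchedSet μ h, prio h d < prio h d')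

/-- Stability: individual rationality, capacities respected, and no blocking pair. -/
def IsStable (pref : D → List H) (prio : H → D → ℕ) (acc : H → Finset D) (q : H → ℕ)
    (μ : D → Option H) : Prop :=
  IndivRat pref acc μ ∧ (∀ h, (matchedSet μ h).card ≤ q h) ∧
    ∀ d h, ¬ Blocks pref prio acc q μ d h

/- ===================== Auxiliary lemmas ===================== -/

private lemma find?_le_indexOf {α : Type*} [DecidableEq α] {p : α → Bool} {l : List α} {a : α}
    (ha : a ∈ l) (hpa : p a = true) :
    ∃ b, l.find? p = some b ∧ l.idxOf b ≤ l.idxOf a := by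
  induction l with
  | nil => cases ha
  | cons c l ih =>
    by_cases hc : p c = true
    · exact ⟨c, by simp [List.find?_cons, hc], by simp [List.idxOf_cons_self]⟩
    · have hac : a ≠ c := by rintro rfl; exact hc hpa
      have ha' : a ∈ l := by
        rcases List.mem_cons.1 ha with h | h
        · exact absurd h hac
        · exact h
      obtain ⟨b, hb, hle⟩ := ih ha'
      have hbc : b ≠ c := by rintro rfl; exact hc (List.find?_some hb)
      refine ⟨b, ?_, ?_⟩
      · rw [List.find?_cons]
        simp only [Bool.not_eq_true] at hc
        rw [hc]; exact hb
      · rw [List.idxOf_cons_ne _ hbc.symm, List.idxOf_cons_ne _ hac.symm]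
        exact Nat.succ_le_succ hle

section DA

variable {pref : D → List H} {prio : H → D → ℕ} {acc : H → Finset D} {q : H → ℕ}

private lemma mem_proposers {A : Finset (D × H)} {d : D} {h : H} :
    d ∈ proposers pref A h ↔ propose pref A d = some h := by
  simp [proposers]

private lemma propose_mem {A : Finset (D × H)} {d : D} {h : H}
    (hp : propose pref A d = some h) : h ∈ pref d :=
  List.mem_of_find?_eq_some hp

private lemma propose_not_mem {A : Finset (D × H)} {d : D} {h : H}
    (hp : propose pref A d = some h) : (d, h) ∉ A := by
  have := List.find?_some hp
  simpa using this

private lemma propose_exists {A : Finset (D × H)} {d : D} {h : H}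
    (hm : h ∈ pref d) (hA : (d, h) ∉ A) :
    ∃ b, propose pref A d = some b ∧ (pref d).idxOf b ≤ (pref d).idxOf h :=
  find?_le_indexOf hm (by simpa using hA)

private lemma mem_topN {h : H} {n : ℕ} {S : Finset D} {d : D} :
    d ∈ topN prio h n S ↔ d ∈ S ∧ (S.filter (fun d' => prio h d' < prio h d)).card < n :=
  Finset.mem_filter

private lemma card_topN {h : H} (hinj : Function.Injective (prio h)) (n : ℕ) (S : Finset D) :
    (topN prio h n S).card = min n S.card := by
  set f : D → ℕ := fun d => (S.filter (fun d' => prio h d' < prio h d)).card with hf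
  have hmono : ∀ a ∈ S, ∀ b, prio h a < prio h b → f a < f b := by
    intro a ha b hab
    apply Finset.card_lt_card
    constructor
    · intro x hx
      rw [Finset.mem_filter] at hx ⊢
      exact ⟨hx.1, lt_trans hx.2 hab⟩
    · intro hsub
      have : a ∈ S.filter (fun d' => prio h d' < prio h a) :=
        hsub (Finset.mem_filter.2 ⟨ha, hab⟩)
      simp at this
  have hlt_card : ∀ a ∈ S, f a < S.card := by
    intro a ha
    apply Finset.card_lt_card
    refine ⟨Finset.filter_subset _ _, fun hsub => ?_⟩
    have := hsub ha
    simp at this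
  have hinjOn : Set.InjOn f ↑S := by
    intro a haS b hbS hfab
    rcases lt_trichotomy (prio h a) (prio h b) with hlt | heq | hgt
    · exact absurd hfab (Nat.ne_of_lt (hmono a haS b hlt))
    · exact hinj heq
    · exact absurd hfab.symm (Nat.ne_of_lt (hmono b hbS a hgt))
  have himg : S.image f = Finset.range S.card := by
    apply Finset.eq_of_subset_of_card_le
    · intro x hx
      rw [Finset.mem_image] at hx
      obtain ⟨a, ha, rfl⟩ := hx
      exact Finset.mem_range.2 (hlt_card a ha)
    · rw [Finset.card_range, Finset.card_image_of_injOn hinjOn]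
  have htop : topN prio h n S = S.filter (fun d => f d < n) := rfl
  have himg2 : (topN prio h n S).image f = (Finset.range S.card).filter (fun x => x < n) := by
    rw [htop, ← himg]
    ext x
    simp only [Finset.mem_image, Finset.mem_filter]
    constructor
    · rintro ⟨a, ⟨ha, hlt⟩, rfl⟩; exact ⟨⟨a, ha, rfl⟩, hlt⟩
    · rintro ⟨⟨a, ha, rfl⟩, hlt⟩; exact ⟨a, ⟨ha, hlt⟩, rfl⟩
  have hsubS : ↑(topN prio h n S) ⊆ (↑S : Set D) := by
    intro x hx
    exact Finset.mem_coe.2 (mem_topN.1 (Finset.mem_coe.1 hx)).1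
  have hcard : (topN prio h n S).card
      = ((Finset.range S.card).filter (fun x => x < n)).card := by
    rw [← himg2, Finset.card_image_of_injOn (hinjOn.mono hsubS)]
  rw [hcard]
  have : (Finset.range S.card).filter (fun x => x < n) = Finset.range (min n S.card) := by
    ext x
    simp only [Finset.mem_filter, Finset.mem_range, Nat.lt_min]
    tauto
  rw [this, Finset.card_range]

/-- At a fixed point of `daStep`, every proposer is kept. -/
private lemma proposers_subset_kept {A : Finset (D × H)}
    (hfix : daStep pref prio acc q A = A) (h : H) :
    proposers pref A h ⊆ kept pref prio acc q A h := by
  intro d hd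
  by_contra hnk
  have hp := mem_proposers.1 hd
  have hmem : (d, h) ∈ daStep pref prio acc q A :=
    Finset.mem_union_right _ (Finset.mem_filter.2 ⟨Finset.mem_univ _, hp, hnk⟩)
  rw [hfix] at hmem
  exact propose_not_mem hp hmem

/-- If `d` proposes to `h`, `μ d` has never been rejected, and `μ d ≠ some h`,
then `d` strictly prefers `h` to `μ d`. -/
private lemma dprefers_of_propose {μ : D → Option H} {A : Finset (D × H)} {d : D} {h : H}
    (hp : propose pref A d = some h)
    (hinv : ∀ h2, μ d = some h2 → (d, h2) ∉ A)
    (hIR : ∀ h2, μ d = some h2 → h2 ∈ pref d)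
    (hne : μ d ≠ some h) :
    DPrefers pref d h (μ d) := by
  have hmemh : h ∈ pref d := propose_mem hp
  refine ⟨hmemh, ?_⟩
  cases hmu : μ d with
  | none =>
    simpa [rankOf] using List.idxOf_lt_length_iff.2 hmemh
  | some h2 =>
    have h2mem := hIR h2 hmu
    obtain ⟨b, hb, hble⟩ := propose_exists h2mem (hinv h2 hmu)
    rw [hp] at hb
    obtain rfl : h = b := Option.some.inj hb
    have hne2 : h ≠ h2 := fun e => hne (e ▸ hmu)
    have hidx : (pref d).idxOf h ≠ (pref d).idxOf h2 :=
      fun e => hne2 ((List.idxOf_inj hmemh).1 e)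
    simp only [rankOf]
    omega

/-- The key invariant: the DA procedure never rejects a doctor from the hospital
it is assigned to in any stable matching. -/
private lemma da_invariant {μ : D → Option H} (hμ : IsStable pref prio acc q μ) :
    ∀ n d h, μ d = some h → (d, h) ∉ (daStep pref prio acc q)^[n] ∅ := by
  intro n
  induction n with
  | zero => intro d h _ hmem; simp at hmem
  | succ n ih =>
    intro d h hdh hmem
    rw [Function.iterate_succ_apply'] at hmem
    set A := (daStep pref prio acc q)^[n] (∅ : Finset (D × H)) with hA
    by_cases hAmem : (d, h) ∈ A
    · exact ih d h hdh hAmem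
    rw [daStep, Finset.mem_union] at hmem
    rcases hmem with hmem | hmem
    · exact hAmem hmem
    obtain ⟨-, hprop, hnk⟩ := Finset.mem_filter.1 hmem
    set S := proposers pref A h ∩ acc h with hS
    have hdS : d ∈ S := Finset.mem_inter.2 ⟨mem_proposers.2 hprop, (hμ.1 d h hdh).2⟩
    have hq : q h ≤ (S.filter (fun d' => prio h d' < prio h d)).card := by
      by_contra hlt
      push_neg at hlt
      exact hnk (mem_topN.2 ⟨hdS, hlt⟩)
    set T := S.filter (fun d' => prio h d' < prio h d) with hT
    set M := matchedSet μ h with hM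
    have hdM : d ∈ M := by simp [hM, matchedSet, hdh]
    have hTM : ¬ T ⊆ M := by
      intro hsub
      have hTe : T ⊆ M.erase d := by
        intro x hx
        refine Finset.mem_erase.2 ⟨?_, hsub hx⟩
        have := (Finset.mem_filter.1 hx).2
        rintro rfl
        simp at this
      have h1 := Finset.card_le_card hTe
      have h2 : (M.erase d).card < M.card := Finset.card_erase_lt_of_mem hdM
      have h3 : M.card ≤ q h := hμ.2.1 h
      omega
    obtain ⟨d', hd'T, hd'M⟩ := Finset.not_subset.1 hTM
    have hd'S : d' ∈ S := (Finset.mem_filter.1 hd'T).1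
    have hlt : prio h d' < prio h d := (Finset.mem_filter.1 hd'T).2
    have hp' : propose pref A d' = some h := mem_proposers.1 (Finset.mem_inter.1 hd'S).1
    have hμd' : μ d' ≠ some h := by
      intro he
      exact hd'M (by simp [hM, matchedSet, he])
    have hDP : DPrefers pref d' h (μ d') :=
      dprefers_of_propose hp' (fun h2 hh2 => ih d' h2 hh2) (fun h2 hh2 => (hμ.1 d' h2 hh2).1) hμd'
    exact hμ.2.2 d' h ⟨hDP, Or.inr ⟨d, hdM, hlt⟩⟩

/-- The iterate used in `daMatch` is a fixed point of `daStep`. -/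
private lemma da_fixed :
    daStep pref prio acc q ((daStep pref prio acc q)^[Fintype.card D * Fintype.card H + 1] ∅)
      = (daStep pref prio acc q)^[Fintype.card D * Fintype.card H + 1] ∅ := by
  set f := daStep pref prio acc q with hfdef
  have hf : ∀ A, A ⊆ f A := fun A => Finset.subset_union_left
  have key : ∀ n, n ≤ (f^[n] (∅ : Finset (D × H))).card ∨ f (f^[n] ∅) = f^[n] ∅ := by
    intro n
    induction n with
    | zero => exact Or.inl (Nat.zero_le _)
    | succ n ih =>
      rcases ih with hc | hfix
      · by_cases he : f (f^[n] ∅) = f^[n] ∅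
        · right
          rw [Function.iterate_succ_apply', he]
          exact he
        · left
          rw [Function.iterate_succ_apply']
          have hss : f^[n] (∅ : Finset (D × H)) ⊂ f (f^[n] ∅) :=
            (Finset.ssubset_iff_subset_ne).2 ⟨hf _, Ne.symm he⟩
          have := Finset.card_lt_card hss
          omega
      · right
        rw [Function.iterate_succ_apply', hfix]
        exact hfix
  rcases key (Fintype.card D * Fintype.card H + 1) with hc | hfix
  · exfalso
    have h1 : ((f^[Fintype.card D * Fintype.card H + 1] (∅ : Finset (D × H)))).card
        ≤ Fintype.card (D × H) := Finset.card_le_univ _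
    rw [Fintype.card_prod] at h1
    omega
  · exact hfix

end DA

/-- Counting doubly: the total number of seats filled equals the number of matched doctors. -/
private lemma sum_matched (μ : D → Option H) :
    ∑ h : H, (matchedSet μ h).card = (univ.filter (fun d => μ d ≠ none)).card := by
  simp only [matchedSet, Finset.card_filter]
  rw [Finset.sum_comm]
  refine Finset.sum_congr rfl fun d _ => ?_
  cases hd : μ d with
  | none => simp [hd]
  | some h0 => simp [hd, eq_comm]

/-- The DA outcome fills each hospital exactly as much as any stable matching does. -/
private lemma da_card_eq {pref : D → List H} {prio : H → D → ℕ} {acc : H → Finset D}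
    {q : H → ℕ} (hinj : ∀ h, Function.Injective (prio h))
    {μ : D → Option H} (hμ : IsStable pref prio acc q μ) (h : H) :
    (matchedSet (daMatch pref prio acc q) h).card = (matchedSet μ h).card := by
  classical
  set A := (daStep pref prio acc q)^[Fintype.card D * Fintype.card H + 1]
    (∅ : Finset (D × H)) with hA
  set ν := daMatch pref prio acc q with hν
  have hνp : ∀ d, ν d = propose pref A d := fun d => rfl
  have hfix : daStep pref prio acc q A = A := da_fixed
  have hinv : ∀ d h2, μ d = some h2 → (d, h2) ∉ A :=
    fun d h2 hd => da_invariant hμ _ d h2 hd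
  -- matched set of ν is the proposer set
  have hmν : ∀ h0 : H, matchedSet ν h0 = proposers pref A h0 := by
    intro h0
    ext d
    simp [matchedSet, proposers, hνp]
  -- each ν-matched doctor is kept, hence acceptable
  have hacc : ∀ h0 : H, ∀ d ∈ matchedSet ν h0, d ∈ acc h0 := by
    intro h0 d hd
    rw [hmν] at hd
    have hk := proposers_subset_kept hfix h0 hd
    have := (mem_topN.1 hk).1
    exact (Finset.mem_inter.1 this).2
  -- capacities are respected by ν
  have hcap : ∀ h0 : H, (matchedSet ν h0).card ≤ q h0 := by
    intro h0
    have h1 : matchedSet ν h0 ⊆ kept pref prio acc q A h0 := by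
      rw [hmν]; exact proposers_subset_kept hfix h0
    have h2 := Finset.card_le_card h1
    have h3 := card_topN (prio := prio) (hinj h0) (q h0)
      (proposers pref A h0 ∩ acc h0)
    rw [kept] at h2
    rw [h3] at h2
    exact h2.trans (Nat.min_le_left _ _)
  -- pointwise: ν fills each hospital no more than μ does
  have hle : ∀ h0 : H, (matchedSet ν h0).card ≤ (matchedSet μ h0).card := by
    intro h0
    by_contra hgt
    push_neg at hgt
    have hns : ¬ matchedSet ν h0 ⊆ matchedSet μ h0 := by
      intro hsub
      exact absurd (Finset.card_le_card hsub) (by omega)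
    obtain ⟨d, hdν, hdμ⟩ := Finset.not_subset.1 hns
    have hpd : propose pref A d = some h0 := by
      rw [← hνp]
      exact (Finset.mem_filter.1 hdν).2
    have hμd : μ d ≠ some h0 := by
      intro he
      exact hdμ (by simp [matchedSet, he])
    have hDP : DPrefers pref d h0 (μ d) :=
      dprefers_of_propose hpd (fun h2 hh2 => hinv d h2 hh2)
        (fun h2 hh2 => (hμ.1 d h2 hh2).1) hμd
    have hblock : Blocks pref prio acc q μ d h0 :=
      ⟨hDP, Or.inl ⟨lt_of_lt_of_le hgt (hcap h0), hacc h0 d hdν⟩⟩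
    exact hμ.2.2 d h0 hblock
  -- every μ-matched doctor is ν-matched
  have hmatched : (univ.filter (fun d => μ d ≠ none)).card
      ≤ (univ.filter (fun d => ν d ≠ none)).card := by
    apply Finset.card_le_card
    intro d hd
    rw [Finset.mem_filter] at hd ⊢
    refine ⟨Finset.mem_univ _, ?_⟩
    obtain ⟨h2, hh2⟩ := Option.ne_none_iff_exists'.1 hd.2
    obtain ⟨b, hb, -⟩ := propose_exists ((hμ.1 d h2 hh2).1) (hinv d h2 hh2)
    rw [hνp, hb]
    simp
  have hsum : ∑ h0 : H, (matchedSet μ h0).card ≤ ∑ h0 : H, (matchedSet ν h0).card := by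
    rw [sum_matched, sum_matched]
    exact hmatched
  -- conclude pointwise equality
  by_contra hne
  have hstrict : (matchedSet ν h).card < (matchedSet μ h).card :=
    lt_of_le_of_ne (hle h) hne
  have : ∑ h0 : H, (matchedSet ν h0).card < ∑ h0 : H, (matchedSet μ h0).card :=
    Finset.sum_lt_sum (fun i _ => hle i) ⟨h, Finset.mem_univ _, hstrict⟩
  omega

/-- rural hospital theorem: any two stable matchings assign the same
number of doctors to each hospital, so their distributions coincide. -/
theorem rural_hospital (pref : D → List H) (prio : H → D → ℕ) (acc : H → Finset D)
    (q : H → ℕ) (hinj : ∀ h, Function.Injective (prio h))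
    (hnd : ∀ d, (pref d).Nodup)
    (hcons : ∀ h d d', prio h d < prio h d' → d' ∈ acc h → d ∈ acc h)
    (μ μ' : D → Option H) (hμ : IsStable pref prio acc q μ)
    (hμ' : IsStable pref prio acc q μ') :
    ∀ h, (matchedSet μ h).card = (matchedSet μ' h).card := by
  intro h
  rw [← da_card_eq hinj hμ h, da_card_eq hinj hμ' h]
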